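/- Two-sided error estimate (Case II): let (x, y) ∈ D(A) × D(A*) satisfy A*y + i x = f and Ax = y. Then for any (x̃, ỹ) ∈ D(A) × D(A*): (√2/(√2+1))·M ≤ ‖x−x̃‖² + ‖A(x−x̃)‖² + ‖y−ỹ‖² + ‖A*(y−ỹ)‖² ≤ (√2/(√2−1))·M, where M = ‖f − i x̃ − A*ỹ‖² + ‖ỹ − A x̃‖². -/

import Mathlib

open scoped ComplexInnerProductSpace

set_option maxHeartbeats 1000000 in
/-- Two-sided error estimate (Case II). -/
theorem stmt_10
    {H1 H2 : Type*} [NormedAddCommGroup H1] [InnerProductSpace ℂ H1] [CompleteSpace H1]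
    [NormedAddCommGroup H2] [InnerProductSpace ℂ H2] [CompleteSpace H2]
    (A : H1 →ₗ.[ℂ] H2) (hd : Dense (A.domain : Set H1)) (hc : A.IsClosed)
    (f : H1) (x xt : A.domain) (y yt : A.adjoint.domain)
    (h1 : A.adjoint y + Complex.I • (x : H1) = f) (h2 : A x = (y : H2)) :
    Real.sqrt 2 / (Real.sqrt 2 + 1) *
        (‖f - Complex.I • (xt : H1) - A.adjoint yt‖ ^ 2 + ‖(yt : H2) - A xt‖ ^ 2)
      ≤ ‖(x : H1) - (xt : H1)‖ ^ 2 + ‖A (x - xt)‖ ^ 2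
        + ‖(y : H2) - (yt : H2)‖ ^ 2 + ‖A.adjoint (y - yt)‖ ^ 2 ∧
    ‖(x : H1) - (xt : H1)‖ ^ 2 + ‖A (x - xt)‖ ^ 2
        + ‖(y : H2) - (yt : H2)‖ ^ 2 + ‖A.adjoint (y - yt)‖ ^ 2
      ≤ Real.sqrt 2 / (Real.sqrt 2 - 1) *
        (‖f - Complex.I • (xt : H1) - A.adjoint yt‖ ^ 2 + ‖(yt : H2) - A xt‖ ^ 2) := by
  have hadj := A.adjoint_isFormalAdjoint hd
  have hecoe : ((x - xt : A.domain) : H1) = (x : H1) - (xt : H1) := rfl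
  have hdcoe : ((y - yt : A.adjoint.domain) : H2) = (y : H2) - (yt : H2) := rfl
  obtain ⟨c, hcc⟩ : ∃ c : ℂ, c = ⟪A (x - xt), ((y - yt : A.adjoint.domain) : H2)⟫ := ⟨_, rfl⟩
  -- rewrite the two residual terms
  have hT1 : f - Complex.I • (xt : H1) - A.adjoint yt
      = A.adjoint (y - yt) + Complex.I • (((x - xt : A.domain)) : H1) := by
    rw [← h1, A.adjoint.map_sub, hecoe, smul_sub]
    abel
  have hT2 : (yt : H2) - A xt
      = A (x - xt) - ((y - yt : A.adjoint.domain) : H2) := by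
    rw [A.map_sub, h2, hdcoe]
    abel
  -- norm expansions
  have h' : ⟪A.adjoint (y - yt), Complex.I • (((x - xt : A.domain)) : H1)⟫
      = Complex.I * (starRingEnd ℂ) c := by
    rw [inner_smul_right, hadj (y - yt) (x - xt), hcc, ← inner_conj_symm]
  have hM1 : ‖A.adjoint (y - yt) + Complex.I • (((x - xt : A.domain)) : H1)‖ ^ 2
      = ‖A.adjoint (y - yt)‖ ^ 2 + 2 * c.im + ‖((x - xt : A.domain) : H1)‖ ^ 2 := by
    rw [@norm_add_sq ℂ, h', norm_smul]
    simp [Complex.mul_re]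
  have hM2 : ‖A (x - xt) - ((y - yt : A.adjoint.domain) : H2)‖ ^ 2
      = ‖A (x - xt)‖ ^ 2 - 2 * c.re + ‖((y - yt : A.adjoint.domain) : H2)‖ ^ 2 := by
    rw [@norm_sub_sq ℂ, ← hcc]
    simp only [RCLike.re_to_complex]
  -- bounds on c
  have hc1 : ‖c‖ ≤ ‖A (x - xt)‖ * ‖(y : H2) - (yt : H2)‖ := by
    rw [hcc, ← hdcoe] at *
    exact norm_inner_le_norm _ _
  have hc2 : ‖c‖ ≤ ‖(x : H1) - (xt : H1)‖ * ‖A.adjoint (y - yt)‖ := by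
    have hcalt : c = ⟪((x - xt : A.domain) : H1), A.adjoint (y - yt)⟫ := by
      rw [hcc, ← inner_conj_symm, ← hadj (y - yt) (x - xt), inner_conj_symm]
    rw [hcalt, ← hecoe]
    exact norm_inner_le_norm _ _
  have hnc : ‖c‖ ^ 2 = c.re ^ 2 + c.im ^ 2 := by
    rw [Complex.sq_norm, Complex.normSq_apply]
    ring
  have h0a : (0:ℝ) ≤ ‖(x : H1) - (xt : H1)‖ := norm_nonneg _
  have h0b : (0:ℝ) ≤ ‖A (x - xt)‖ := norm_nonneg _
  have h0p : (0:ℝ) ≤ ‖(y : H2) - (yt : H2)‖ := norm_nonneg _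
  have h0q : (0:ℝ) ≤ ‖A.adjoint (y - yt)‖ := norm_nonneg _
  have h0c : (0:ℝ) ≤ ‖c‖ := norm_nonneg _
  set a := ‖(x : H1) - (xt : H1)‖
  set b := ‖A (x - xt)‖
  set p := ‖(y : H2) - (yt : H2)‖
  set q := ‖A.adjoint (y - yt)‖
  have hcE : 4 * ‖c‖ ≤ a ^ 2 + b ^ 2 + p ^ 2 + q ^ 2 := by
    nlinarith [sq_nonneg (a - q), sq_nonneg (b - p)]
  have hs2 : Real.sqrt 2 ^ 2 = 2 := Real.sq_sqrt (by norm_num)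
  have hs1 : 1 < Real.sqrt 2 := by nlinarith [Real.sqrt_nonneg 2]
  have hs0 : (0:ℝ) ≤ Real.sqrt 2 := Real.sqrt_nonneg 2
  have hkey : |c.im - c.re| ≤ Real.sqrt 2 * ‖c‖ := by
    have hsq : (c.im - c.re) ^ 2 ≤ (Real.sqrt 2 * ‖c‖) ^ 2 := by
      rw [mul_pow, hs2, hnc]
      nlinarith [sq_nonneg (c.im + c.re)]
    have h1' := Real.sqrt_le_sqrt hsq
    rwa [Real.sqrt_sq_eq_abs, Real.sqrt_sq (mul_nonneg hs0 h0c)] at h1'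
  have habs := abs_le.mp hkey
  have hu : Real.sqrt 2 * (c.im - c.re) ≤ 2 * ‖c‖ := by
    have := mul_le_mul_of_nonneg_left habs.2 hs0
    nlinarith
  have hl : -(2 * ‖c‖) ≤ Real.sqrt 2 * (c.im - c.re) := by
    have := mul_le_mul_of_nonneg_left habs.1 hs0
    nlinarith
  have hM : ‖f - Complex.I • (xt : H1) - A.adjoint yt‖ ^ 2 + ‖(yt : H2) - A xt‖ ^ 2
      = a ^ 2 + b ^ 2 + p ^ 2 + q ^ 2 + 2 * (c.im - c.re) := by
    rw [hT1, hT2, hM1, hM2, hecoe, hdcoe]; ring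
  constructor
  · rw [hM, div_mul_eq_mul_div, div_le_iff₀ (by linarith)]
    nlinarith
  · rw [hM, div_mul_eq_mul_div, le_div_iff₀ (by linarith)]
    nlinarith
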